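/- (Functional equation for 123-avoiding permutations with the first-ascent statistic.) For a permutation τ of {1,…,n} with no ascending subsequence of length 3, let a(τ) = n+1 if τ has no ascent, and otherwise a(τ) = min{ i : τ(i−1) < τ(i) }. For n ≥ 0, define F_n(u) = ∑_{τ ∈ S_n^{(2)}} u^{a(τ)−1} ∈ ℤ[u]. Then F_0 = 1, and for every n ≥ 0 the following polynomial identity holds in ℤ[u]: (u − 1)·F_{n+1}(u) = u^2·F_n(u) − u·F_n(1). -/

import Mathlib

open scoped Classical

noncomputable section

/-- `f` has an ascending subsequence of length `k`. -/
def HasAscSeq {n : ℕ} (f : Fin n → Fin n) (k : ℕ) : Prop :=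
  ∃ s : Fin k → Fin n, StrictMono s ∧ StrictMono fun a => f (s a)

/-- The (1-based) position of the first ascent of `f`:
`a(f) = min{ i : f(i−1) < f(i) }`, or `n+1` if there is no ascent. -/
def aFirst {n : ℕ} (f : Fin n → Fin n) : ℕ :=
  sInf ({n + 1} ∪ { i : ℕ | ∃ p : Fin n, 1 ≤ (p : ℕ) ∧
    f ⟨(p : ℕ) - 1, by have := p.isLt; omega⟩ < f p ∧ i = (p : ℕ) + 1 })

/-- `F_n(u) = ∑_{τ∈S_n^{(2)}} u^{a(τ)−1} ∈ ℤ[u]`. -/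
def F2poly (n : ℕ) : Polynomial ℤ :=
  ∑ τ ∈ Finset.univ.filter (fun τ : Equiv.Perm (Fin n) => ¬ HasAscSeq (⇑τ) 3),
    Polynomial.X ^ (aFirst (⇑τ) - 1)

/-! ### Auxiliary lemmas about `aFirst` -/

section AFirstAPI

variable {m : ℕ} (f : Fin m → Fin m)

lemma aFirst_le_add_one : aFirst f ≤ m + 1 :=
  Nat.sInf_le (Or.inl rfl)

lemma aFirst_le {p : Fin m} (hp : 1 ≤ (p : ℕ))
    (h : f ⟨(p : ℕ) - 1, by have := p.isLt; omega⟩ < f p) : aFirst f ≤ (p : ℕ) + 1 :=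
  Nat.sInf_le (Or.inr ⟨p, hp, h, rfl⟩)

lemma aFirst_spec : aFirst f = m + 1 ∨ ∃ p : Fin m, 1 ≤ (p : ℕ) ∧
    f ⟨(p : ℕ) - 1, by have := p.isLt; omega⟩ < f p ∧ aFirst f = (p : ℕ) + 1 := by
  have hne : ({m + 1} ∪ { i : ℕ | ∃ p : Fin m, 1 ≤ (p : ℕ) ∧
      f ⟨(p : ℕ) - 1, by have := p.isLt; omega⟩ < f p ∧ i = (p : ℕ) + 1 }).Nonempty :=
    ⟨m + 1, Or.inl rfl⟩
  have h := Nat.sInf_mem hne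
  rcases h with h | h
  · exact Or.inl h
  · obtain ⟨p, h1, h2, h3⟩ := h
    exact Or.inr ⟨p, h1, h2, h3⟩

lemma one_le_aFirst : 1 ≤ aFirst f := by
  rcases aFirst_spec f with h | ⟨p, h1, _, h3⟩ <;> omega

/-- val-level version of `aFirst_le`. -/
lemma aFirst_le' {q : ℕ} (h1 : 1 ≤ q) (h2 : q < m) {u v : Fin m}
    (hu : (u : ℕ) = q - 1) (hv : (v : ℕ) = q) (huv : f u < f v) : aFirst f ≤ q + 1 := by
  refine Nat.sInf_le (Or.inr ⟨⟨q, h2⟩, by simpa using h1, ?_, rfl⟩)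
  convert huv using 2
  · exact Fin.ext (by simp [hu])
  · exact Fin.ext (by simp [hv])

/-- val-level: no ascent strictly before the first ascent. -/
lemma not_ascent' {q : ℕ} (h1 : 1 ≤ q) (hlt : q + 1 < aFirst f) {u v : Fin m}
    (hu : (u : ℕ) = q - 1) (hv : (v : ℕ) = q) : ¬ f u < f v := by
  intro hc
  have h2 : q < m := by have := v.isLt; omega
  exact absurd (aFirst_le' f h1 h2 hu hv hc) (by omega)

lemma aFirst_eq_none' (hdesc : ∀ q : ℕ, 1 ≤ q → q < m →
    ∀ u v : Fin m, (u : ℕ) = q - 1 → (v : ℕ) = q → ¬ f u < f v) : aFirst f = m + 1 := by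
  rcases aFirst_spec f with h | ⟨p, h1, h2, h3⟩
  · exact h
  · exact absurd h2 (hdesc (p : ℕ) h1 p.isLt _ p rfl rfl)

lemma aFirst_eq_of' {q : ℕ} (h1 : 1 ≤ q) (h2 : q < m) {u v : Fin m}
    (hu : (u : ℕ) = q - 1) (hv : (v : ℕ) = q) (hasc : f u < f v)
    (hdesc : ∀ q' : ℕ, 1 ≤ q' → q' < q →
      ∀ u' v' : Fin m, (u' : ℕ) = q' - 1 → (v' : ℕ) = q' → ¬ f u' < f v') :
    aFirst f = q + 1 := by
  have hle := aFirst_le' f h1 h2 hu hv hasc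
  rcases aFirst_spec f with h | ⟨p, hp1, hp2, hp3⟩
  · omega
  · by_cases hpq : (p : ℕ) < q
    · exact absurd hp2 (hdesc (p : ℕ) hp1 hpq _ p rfl rfl)
    · omega

end AFirstAPI

/-- The entries of a permutation are strictly decreasing before the first ascent. -/
lemma desc_of_aFirst {m : ℕ} (σ : Equiv.Perm (Fin m)) :
    ∀ k : ℕ, ∀ j i : Fin m, (j : ℕ) = k → i < j → (j : ℕ) + 2 ≤ aFirst ⇑σ → σ j < σ i := by
  intro k
  induction k with
  | zero =>
    intro j i hjk hij _
    exact absurd hij (by rw [Fin.lt_def]; omega)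
  | succ k ih =>
    intro j i hjk hij hja
    have hk : k < m := by have := j.isLt; omega
    have hadj : σ j < σ ⟨k, hk⟩ := by
      have h2 := not_ascent' (⇑σ) (q := (j : ℕ)) (by omega) (by omega)
        (u := ⟨k, hk⟩) (v := j) (by simp; omega) rfl
      have hne : σ ⟨k, hk⟩ ≠ σ j := by
        intro h
        have := σ.injective h
        have : ((⟨k, hk⟩ : Fin m) : ℕ) = (j : ℕ) := by rw [this]
        simp at this; omega
      exact lt_of_le_of_ne (not_lt.mp h2) (Ne.symm hne)
    rcases Nat.lt_or_ge (i : ℕ) k with hik | hik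
    · have h1 : σ ⟨k, hk⟩ < σ i := ih ⟨k, hk⟩ i rfl (by rw [Fin.lt_def]; simpa using hik)
        (by simp; omega)
      exact hadj.trans h1
    · have : i = ⟨k, hk⟩ := Fin.ext (by rw [Fin.lt_def] at hij; simp; omega)
      rwa [this]

/-- `HasAscSeq f 3` iff there is an ascending triple. -/
lemma hasAscSeq_three_iff {m : ℕ} (f : Fin m → Fin m) :
    HasAscSeq f 3 ↔ ∃ i j k : Fin m, i < j ∧ j < k ∧ f i < f j ∧ f j < f k := by
  constructor
  · rintro ⟨s, hs, hfs⟩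
    exact ⟨s 0, s 1, s 2, hs (by decide), hs (by decide), hfs (by decide), hfs (by decide)⟩
  · rintro ⟨i, j, k, h1, h2, h3, h4⟩
    refine ⟨![i, j, k], ?_, ?_⟩
    · intro a b hab
      fin_cases a <;> fin_cases b <;>
        simp_all [Matrix.cons_val_zero, Matrix.cons_val_one, Matrix.head_cons] <;>
        first
          | exact h1 | exact h2 | exact h1.trans h2
          | exact absurd hab (by decide)
    · intro a b hab
      fin_cases a <;> fin_cases b <;>
        simp_all [Matrix.cons_val_zero, Matrix.cons_val_one, Matrix.head_cons] <;>
        first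
          | exact h3 | exact h4 | exact h3.trans h4
          | exact absurd hab (by decide)

/-! ### Insertion of the maximal value -/

/-- The permutation of `Fin (n+1)` sending `p ↦ last`, `i ↦ i` for `i < p`,
`i ↦ i - 1` for `i > p`. -/
def dperm {n : ℕ} (p : Fin (n + 1)) : Equiv.Perm (Fin (n + 1)) :=
  (Fin.revPerm (n := n + 1)).trans ((p.rev.cycleRange).trans Fin.revPerm)

lemma dperm_apply_self {n : ℕ} (p : Fin (n + 1)) : dperm p p = Fin.last n := by
  simp [dperm, Equiv.trans_apply, Fin.cycleRange_self, Fin.ext_iff, Fin.val_rev]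

lemma dperm_apply_lt {n : ℕ} {p i : Fin (n + 1)} (h : i < p) : dperm p i = i := by
  simp only [dperm, Equiv.trans_apply, Fin.revPerm_apply]
  rw [Fin.cycleRange_of_gt (Fin.rev_lt_rev.mpr h), Fin.rev_rev]

lemma dperm_apply_gt {n : ℕ} {p i : Fin (n + 1)} (h : p < i) :
    ((dperm p i : Fin (n + 1)) : ℕ) = (i : ℕ) - 1 := by
  have h1 : (1 : ℕ) ≤ (i : ℕ) := by rw [Fin.lt_def] at h; omega
  have hv : ((p.rev.cycleRange) (Fin.rev i) : ℕ) = ((Fin.rev i : Fin (n + 1)) : ℕ) + 1 :=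
    Fin.coe_cycleRange_of_lt (Fin.rev_lt_rev.mpr h)
  simp only [dperm, Equiv.trans_apply, Fin.revPerm_apply]
  rw [Fin.val_rev, hv, Fin.val_rev]
  have := i.isLt
  omega

/-- Extension of a permutation of `Fin n` to `Fin (n+1)` fixing `last`. -/
def Eperm {n : ℕ} (σ : Equiv.Perm (Fin n)) : Equiv.Perm (Fin (n + 1)) :=
  (Equiv.permCongr finSuccEquivLast).symm σ.optionCongr

lemma Eperm_castSucc {n : ℕ} (σ : Equiv.Perm (Fin n)) (i : Fin n) :
    Eperm σ (Fin.castSucc i) = Fin.castSucc (σ i) := by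
  simp [Eperm, Equiv.permCongr_symm, Equiv.permCongr_apply]

lemma Eperm_last {n : ℕ} (σ : Equiv.Perm (Fin n)) : Eperm σ (Fin.last n) = Fin.last n := by
  simp [Eperm, Equiv.permCongr_symm, Equiv.permCongr_apply]

/-- Insert the maximal value `n` at position `p` into `σ`. -/
def insp {n : ℕ} (σ : Equiv.Perm (Fin n)) (p : Fin (n + 1)) : Equiv.Perm (Fin (n + 1)) :=
  (dperm p).trans (Eperm σ)

lemma insp_apply_self {n : ℕ} (σ : Equiv.Perm (Fin n)) (p : Fin (n + 1)) :
    insp σ p p = Fin.last n := by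
  rw [insp, Equiv.trans_apply, dperm_apply_self, Eperm_last]

lemma insp_apply_lt {n : ℕ} (σ : Equiv.Perm (Fin n)) (p : Fin (n + 1)) {i : Fin n}
    (h : (i : ℕ) < (p : ℕ)) : insp σ p (Fin.castSucc i) = Fin.castSucc (σ i) := by
  rw [insp, Equiv.trans_apply, dperm_apply_lt (by rw [Fin.lt_def]; simpa using h),
    Eperm_castSucc]

lemma insp_apply_ge {n : ℕ} (σ : Equiv.Perm (Fin n)) (p : Fin (n + 1)) {i : Fin n}
    (h : (p : ℕ) ≤ (i : ℕ)) : insp σ p (Fin.succ i) = Fin.castSucc (σ i) := by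
  have h1 : p < Fin.succ i := by rw [Fin.lt_def]; simp; omega
  have h2 : dperm p (Fin.succ i) = Fin.castSucc i := by
    apply Fin.ext
    rw [dperm_apply_gt h1]
    simp
  rw [insp, Equiv.trans_apply, h2, Eperm_castSucc]

lemma insp_val_self {n : ℕ} (σ : Equiv.Perm (Fin n)) (p : Fin (n + 1)) :
    ((insp σ p p : Fin (n + 1)) : ℕ) = n := by
  rw [insp_apply_self]; rfl

lemma insp_val_lt {n : ℕ} (σ : Equiv.Perm (Fin n)) (p : Fin (n + 1)) {x : Fin (n + 1)}
    (hx : (x : ℕ) < (p : ℕ)) :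
    ((insp σ p x : Fin (n + 1)) : ℕ) =
      ((σ ⟨(x : ℕ), by have := p.isLt; omega⟩ : Fin n) : ℕ) := by
  have hxe : x = Fin.castSucc ⟨(x : ℕ), by have := p.isLt; omega⟩ := Fin.ext rfl
  conv_lhs => rw [hxe]
  rw [insp_apply_lt σ p (by simpa using hx)]
  simp

lemma insp_val_gt {n : ℕ} (σ : Equiv.Perm (Fin n)) (p : Fin (n + 1)) {x : Fin (n + 1)}
    (hx : (p : ℕ) < (x : ℕ)) :
    ((insp σ p x : Fin (n + 1)) : ℕ) =
      ((σ ⟨(x : ℕ) - 1, by have := x.isLt; omega⟩ : Fin n) : ℕ) := by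
  have hxe : x = Fin.succ ⟨(x : ℕ) - 1, by have := x.isLt; omega⟩ := Fin.ext (by simp; omega)
  conv_lhs => rw [hxe]
  rw [insp_apply_ge σ p (by simp; omega)]
  simp

/-! ### Avoidance transfer -/

/-- Deleting the inserted maximum: indices away from `p` map into `Fin n`. -/
lemma insp_claim {n : ℕ} (σ : Equiv.Perm (Fin n)) (p : Fin (n + 1)) :
    ∀ x y : Fin (n + 1), (x : ℕ) < (y : ℕ) → (x : ℕ) ≠ (p : ℕ) → (y : ℕ) ≠ (p : ℕ) →
      ∃ x' y' : Fin n, (x' : ℕ) < (y' : ℕ) ∧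
        ((insp σ p x : Fin (n + 1)) : ℕ) = ((σ x' : Fin n) : ℕ) ∧
        ((insp σ p y : Fin (n + 1)) : ℕ) = ((σ y' : Fin n) : ℕ) := by
  intro x y hxy hx hy
  have hpn := p.isLt
  have hyn := y.isLt
  rcases Nat.lt_or_ge (x : ℕ) (p : ℕ) with h1 | h1
  · rcases Nat.lt_or_ge (y : ℕ) (p : ℕ) with h2 | h2
    · exact ⟨⟨(x : ℕ), by omega⟩, ⟨(y : ℕ), by omega⟩, by simpa using hxy,
        insp_val_lt σ p h1, insp_val_lt σ p h2⟩
    · have h2' : (p : ℕ) < (y : ℕ) := by omega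
      exact ⟨⟨(x : ℕ), by omega⟩, ⟨(y : ℕ) - 1, by omega⟩, by simp; omega,
        insp_val_lt σ p h1, insp_val_gt σ p h2'⟩
  · have h1' : (p : ℕ) < (x : ℕ) := by omega
    have h2' : (p : ℕ) < (y : ℕ) := by omega
    exact ⟨⟨(x : ℕ) - 1, by omega⟩, ⟨(y : ℕ) - 1, by omega⟩, by simp; omega,
      insp_val_gt σ p h1', insp_val_gt σ p h2'⟩

/-- Lifting indices of `σ` to indices of `insp σ p`. -/
lemma insp_rclaim {n : ℕ} (σ : Equiv.Perm (Fin n)) (p : Fin (n + 1)) :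
    ∀ x' y' : Fin n, (x' : ℕ) < (y' : ℕ) →
      ∃ x y : Fin (n + 1), (x : ℕ) < (y : ℕ) ∧
        ((insp σ p x : Fin (n + 1)) : ℕ) = ((σ x' : Fin n) : ℕ) ∧
        ((insp σ p y : Fin (n + 1)) : ℕ) = ((σ y' : Fin n) : ℕ) := by
  intro x' y' hxy
  rcases Nat.lt_or_ge (x' : ℕ) (p : ℕ) with h1 | h1
  · rcases Nat.lt_or_ge (y' : ℕ) (p : ℕ) with h2 | h2
    · refine ⟨Fin.castSucc x', Fin.castSucc y', by simpa using hxy, ?_, ?_⟩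
      · rw [insp_apply_lt σ p h1]; simp
      · rw [insp_apply_lt σ p h2]; simp
    · refine ⟨Fin.castSucc x', Fin.succ y', by simp; omega, ?_, ?_⟩
      · rw [insp_apply_lt σ p h1]; simp
      · rw [insp_apply_ge σ p h2]; simp
  · have h2 : (p : ℕ) ≤ (y' : ℕ) := by omega
    refine ⟨Fin.succ x', Fin.succ y', by simp; omega, ?_, ?_⟩
    · rw [insp_apply_ge σ p h1]; simp
    · rw [insp_apply_ge σ p h2]; simp

lemma not_hasAscSeq_insp {n : ℕ} (σ : Equiv.Perm (Fin n)) (p : Fin (n + 1))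
    (hσ : ¬ HasAscSeq (⇑σ) 3) (hp : (p : ℕ) + 1 ≤ aFirst ⇑σ) :
    ¬ HasAscSeq (⇑(insp σ p)) 3 := by
  rw [hasAscSeq_three_iff]
  rintro ⟨i, j, k, hij, hjk, hfij, hfjk⟩
  rw [Fin.lt_def] at hij hjk hfij hfjk
  have hmax : ∀ x : Fin (n + 1), ((insp σ p x : Fin (n + 1)) : ℕ) ≤ n := fun x => by
    have := (insp σ p x).isLt; omega
  have hpn := p.isLt
  -- i ≠ p and j ≠ p since values after them are larger
  have hi : (i : ℕ) ≠ (p : ℕ) := by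
    intro h
    have : i = p := Fin.ext h
    rw [this] at hfij
    rw [insp_val_self] at hfij
    exact absurd (hmax j) (by omega)
  have hj : (j : ℕ) ≠ (p : ℕ) := by
    intro h
    have : j = p := Fin.ext h
    rw [this] at hfjk
    rw [insp_val_self] at hfjk
    exact absurd (hmax k) (by omega)
  rcases Nat.lt_trichotomy (k : ℕ) (p : ℕ) with hk | hk | hk
  · -- i < j < k < p : contradiction with descending prefix of σ
    have hiv := insp_val_lt σ p (x := i) (by omega)
    have hjv := insp_val_lt σ p (x := j) (by omega)
    have hkv := insp_val_lt σ p (x := k) (by omega)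
    have hlt : (⟨(i : ℕ), by omega⟩ : Fin n) < ⟨(j : ℕ), by omega⟩ := by
      rw [Fin.lt_def]; simpa using hij
    have hdesc := desc_of_aFirst σ (j : ℕ) ⟨(j : ℕ), by omega⟩ ⟨(i : ℕ), by omega⟩
      (by simp) hlt (by simp; omega)
    rw [Fin.lt_def] at hdesc
    omega
  · -- k = p : i < j < p, ascent in the descending prefix of σ
    have hiv := insp_val_lt σ p (x := i) (by omega)
    have hjv := insp_val_lt σ p (x := j) (by omega)
    have hlt : (⟨(i : ℕ), by omega⟩ : Fin n) < ⟨(j : ℕ), by omega⟩ := by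
      rw [Fin.lt_def]; simpa using hij
    have hdesc := desc_of_aFirst σ (j : ℕ) ⟨(j : ℕ), by omega⟩ ⟨(i : ℕ), by omega⟩
      (by simp) hlt (by simp; omega)
    rw [Fin.lt_def] at hdesc
    omega
  · -- k > p : all three away from p, descend to σ
    have hk' : (k : ℕ) ≠ (p : ℕ) := by omega
    obtain ⟨i', j'1, hij', hvi, hvj1⟩ := insp_claim σ p i j hij hi hj
    obtain ⟨j'2, k', hjk', hvj2, hvk⟩ := insp_claim σ p j k hjk hj hk'
    have hjj : j'1 = j'2 := σ.injective (Fin.ext (by omega))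
    subst hjj
    apply hσ
    rw [hasAscSeq_three_iff]
    exact ⟨i', j'1, k', by rw [Fin.lt_def]; omega, by rw [Fin.lt_def]; omega,
      by rw [Fin.lt_def]; omega, by rw [Fin.lt_def]; omega⟩

lemma not_hasAscSeq_of_insp {n : ℕ} (σ : Equiv.Perm (Fin n)) (p : Fin (n + 1))
    (h : ¬ HasAscSeq (⇑(insp σ p)) 3) : ¬ HasAscSeq (⇑σ) 3 := by
  rw [hasAscSeq_three_iff]
  rintro ⟨i', j', k', hij, hjk, hfij, hfjk⟩
  rw [Fin.lt_def] at hij hjk hfij hfjk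
  obtain ⟨i, j1, hij1, hvi, hvj1⟩ := insp_rclaim σ p i' j' hij
  obtain ⟨j2, k, hjk2, hvj2, hvk⟩ := insp_rclaim σ p j' k' hjk
  have hjj : j1 = j2 := (insp σ p).injective (Fin.ext (by omega))
  subst hjj
  apply h
  rw [hasAscSeq_three_iff]
  exact ⟨i, j1, k, by rw [Fin.lt_def]; omega, by rw [Fin.lt_def]; omega,
    by rw [Fin.lt_def]; omega, by rw [Fin.lt_def]; omega⟩

/-! ### First ascent of the insertion -/

lemma aFirst_insp_zero {n : ℕ} (σ : Equiv.Perm (Fin n)) :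
    aFirst ⇑(insp σ 0) = aFirst ⇑σ + 1 := by
  have h0 : ((0 : Fin (n + 1)) : ℕ) = 0 := rfl
  have hvs : ((insp σ 0 0 : Fin (n + 1)) : ℕ) = n := insp_val_self σ 0
  rcases aFirst_spec (⇑σ) with ha | ⟨p₀, hp1, hp2, ha⟩
  · -- σ has no ascent : neither does insp σ 0
    rw [ha]
    apply aFirst_eq_none' (⇑(insp σ 0))
    intro q hq1 hqm u v hu hv hc
    rw [Fin.lt_def] at hc
    rcases Nat.lt_or_ge 1 q with hq2 | hq2
    · -- q ≥ 2 : ascent in σ, contradiction with ha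
      have hvu := insp_val_gt σ 0 (x := u) (by omega)
      have hvv := insp_val_gt σ 0 (x := v) (by omega)
      have := aFirst_le' (⇑σ) (q := q - 1) (by omega) (by omega)
        (u := ⟨(u : ℕ) - 1, by have := u.isLt; omega⟩)
        (v := ⟨(v : ℕ) - 1, by have := v.isLt; omega⟩)
        (by simp; omega) (by simp; omega) (by rw [Fin.lt_def]; simp; omega)
      omega
    · -- q = 1 : u = 0 carries the max value
      have hu0 : u = 0 := Fin.ext (by omega)
      rw [hu0] at hc
      have hvv := insp_val_gt σ 0 (x := v) (by omega)
      have := (σ ⟨(v : ℕ) - 1, by have := v.isLt; omega⟩).isLt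
      omega
  · -- first ascent of σ at index p₀, so first ascent of insp σ 0 at p₀ + 1
    rw [ha]
    have hp0n := p₀.isLt
    apply aFirst_eq_of' (⇑(insp σ 0)) (q := (p₀ : ℕ) + 1) (by omega) (by omega)
      (u := ⟨(p₀ : ℕ), by omega⟩) (v := ⟨(p₀ : ℕ) + 1, by omega⟩) (by simp) (by simp)
    · -- the ascent
      rw [Fin.lt_def]
      have hvu := insp_val_gt σ 0 (x := (⟨(p₀ : ℕ), by omega⟩ : Fin (n + 1))) (by simp; omega)
      have hvv := insp_val_gt σ 0 (x := (⟨(p₀ : ℕ) + 1, by omega⟩ : Fin (n + 1))) (by simp)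
      rw [Fin.lt_def] at hp2
      have e1 : ((σ ⟨((⟨(p₀ : ℕ), by omega⟩ : Fin (n + 1)) : ℕ) - 1, by omega⟩ : Fin n) : ℕ)
          = ((σ ⟨(p₀ : ℕ) - 1, by omega⟩ : Fin n) : ℕ) := by congr 1
      have e2 : ((σ ⟨((⟨(p₀ : ℕ) + 1, by omega⟩ : Fin (n + 1)) : ℕ) - 1, by omega⟩ : Fin n) : ℕ)
          = ((σ ⟨(p₀ : ℕ), by omega⟩ : Fin n) : ℕ) := by congr 1 <;> simp
      have e3 : ((σ ⟨(p₀ : ℕ) - 1, by omega⟩ : Fin n) : ℕ)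
          = ((σ ⟨(p₀ : ℕ) - 1, by have := p₀.isLt; omega⟩ : Fin n) : ℕ) := by congr 1
      have e4 : ((σ ⟨(p₀ : ℕ), by omega⟩ : Fin n) : ℕ) = ((σ p₀ : Fin n) : ℕ) := by
        congr 1 <;> exact Fin.ext rfl
      omega
    · -- descending before
      intro q' hq1 hq2 u' v' hu' hv' hc
      rw [Fin.lt_def] at hc
      rcases Nat.lt_or_ge 1 q' with hq3 | hq3
      · have hvu := insp_val_gt σ 0 (x := u') (by omega)
        have hvv := insp_val_gt σ 0 (x := v') (by omega)
        have := aFirst_le' (⇑σ) (q := q' - 1) (by omega) (by omega)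
          (u := ⟨(u' : ℕ) - 1, by have := u'.isLt; omega⟩)
          (v := ⟨(v' : ℕ) - 1, by have := v'.isLt; omega⟩)
          (by simp; omega) (by simp; omega) (by rw [Fin.lt_def]; simp; omega)
        omega
      · have hu0 : u' = 0 := Fin.ext (by omega)
        rw [hu0] at hc
        have hvv := insp_val_gt σ 0 (x := v') (by omega)
        have := (σ ⟨(v' : ℕ) - 1, by have := v'.isLt; omega⟩).isLt
        omega

lemma insp_val_lt' {n : ℕ} (σ : Equiv.Perm (Fin n)) (p : Fin (n + 1)) {x : Fin (n + 1)}
    (hx : (x : ℕ) < (p : ℕ)) {w : Fin n} (hw : (w : ℕ) = (x : ℕ)) :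
    ((insp σ p x : Fin (n + 1)) : ℕ) = ((σ w : Fin n) : ℕ) := by
  rw [insp_val_lt σ p hx]
  congr 2
  exact Fin.ext (by simp [hw])

lemma insp_val_gt' {n : ℕ} (σ : Equiv.Perm (Fin n)) (p : Fin (n + 1)) {x : Fin (n + 1)}
    (hx : (p : ℕ) < (x : ℕ)) {w : Fin n} (hw : (w : ℕ) = (x : ℕ) - 1) :
    ((insp σ p x : Fin (n + 1)) : ℕ) = ((σ w : Fin n) : ℕ) := by
  rw [insp_val_gt σ p hx]
  congr 2
  exact Fin.ext (by simp [hw])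

lemma aFirst_insp_pos {n : ℕ} (σ : Equiv.Perm (Fin n)) (p : Fin (n + 1))
    (h1 : 1 ≤ (p : ℕ)) (h2 : (p : ℕ) + 1 ≤ aFirst ⇑σ) :
    aFirst ⇑(insp σ p) = (p : ℕ) + 1 := by
  have hpn := p.isLt
  apply aFirst_eq_of' (⇑(insp σ p)) (q := (p : ℕ)) h1 (by omega)
    (u := ⟨(p : ℕ) - 1, by omega⟩) (v := p) (by simp) rfl
  · -- ascent at p : value before is < n = value at p
    rw [Fin.lt_def]
    obtain ⟨w, hw⟩ : ∃ w : Fin n, (w : ℕ) = (p : ℕ) - 1 := ⟨⟨(p : ℕ) - 1, by omega⟩, rfl⟩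
    have hvu := insp_val_lt' σ p (x := (⟨(p : ℕ) - 1, by omega⟩ : Fin (n + 1)))
      (by show (p : ℕ) - 1 < (p : ℕ); omega) (w := w) (by simp [hw])
    have hvs := insp_val_self σ p
    have := (σ w).isLt
    omega
  · -- descending before p
    intro q' hq1 hq2 u' v' hu' hv' hc
    rw [Fin.lt_def] at hc
    obtain ⟨wu, hwu⟩ : ∃ w : Fin n, (w : ℕ) = (u' : ℕ) := ⟨⟨(u' : ℕ), by omega⟩, rfl⟩
    obtain ⟨wv, hwv⟩ : ∃ w : Fin n, (w : ℕ) = (v' : ℕ) := ⟨⟨(v' : ℕ), by omega⟩, rfl⟩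
    have hvu := insp_val_lt' σ p (x := u') (by omega) (w := wu) hwu
    have hvv := insp_val_lt' σ p (x := v') (by omega) (w := wv) hwv
    have := aFirst_le' (⇑σ) (q := q') hq1 (by omega) (u := wu) (v := wv)
      (by omega) (by omega) (by rw [Fin.lt_def]; omega)
    omega

/-- If the insertion at a positive position avoids 123 then the position is
at most the first ascent of `σ`. -/
lemma bound_insp {n : ℕ} (σ : Equiv.Perm (Fin n)) (p : Fin (n + 1))
    (h1 : 1 ≤ (p : ℕ)) (hav : ¬ HasAscSeq (⇑(insp σ p)) 3) : (p : ℕ) + 1 ≤ aFirst ⇑σ := by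
  by_contra hcon
  push_neg at hcon
  have hpn := p.isLt
  rcases aFirst_spec (⇑σ) with ha | ⟨p₀, hp1, hp2, ha⟩
  · omega
  · -- first ascent of σ at p₀ with p₀ + 1 ≤ p, build a 123 pattern in insp σ p
    have hp0n := p₀.isLt
    have hp0p : (p₀ : ℕ) < (p : ℕ) := by omega
    obtain ⟨w0, hw0v, hw0⟩ : ∃ w : Fin n, (w : ℕ) = (p₀ : ℕ) - 1 ∧
        ((σ w : Fin n) : ℕ) < ((σ p₀ : Fin n) : ℕ) :=
      ⟨_, rfl, Fin.lt_def.mp hp2⟩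
    apply hav
    rw [hasAscSeq_three_iff]
    refine ⟨⟨(p₀ : ℕ) - 1, by omega⟩, ⟨(p₀ : ℕ), by omega⟩, p, ?_, ?_, ?_, ?_⟩
    · rw [Fin.lt_def]; simp; omega
    · rw [Fin.lt_def]; simp; omega
    · rw [Fin.lt_def]
      have hvu := insp_val_lt' σ p (x := (⟨(p₀ : ℕ) - 1, by omega⟩ : Fin (n + 1)))
        (by simp; omega) (w := w0) (by simp [hw0v])
      have hvv := insp_val_lt' σ p (x := (⟨(p₀ : ℕ), by omega⟩ : Fin (n + 1)))
        (by simp; omega) (w := p₀) (by simp)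
      omega
    · rw [Fin.lt_def]
      have hvv := insp_val_lt' σ p (x := (⟨(p₀ : ℕ), by omega⟩ : Fin (n + 1)))
        (by simp; omega) (w := p₀) (by simp)
      have hvs := insp_val_self σ p
      have := (σ p₀).isLt
      omega

/-! ### Deletion of the maximal value -/

lemma optionCongr_removeNone' {α : Type*} (e : Equiv.Perm (Option α)) (h : e none = none) :
    (Equiv.removeNone e).optionCongr = e := by
  apply Equiv.ext
  intro x
  cases x with
  | none =>
    simp only [Equiv.optionCongr_apply, Option.map_none]
    exact h.symm
  | some a =>
    have hx : ∃ b, e (some a) = some b := by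
      rcases hc : e (some a) with _ | b
      · exact absurd (e.injective (hc.trans h.symm)) (by simp)
      · exact ⟨b, rfl⟩
    simp only [Equiv.optionCongr_apply, Option.map_some]
    exact Equiv.removeNone_some _ hx

/-- Delete the maximal value `n` from a permutation of `Fin (n+1)`. -/
def delp {n : ℕ} (τ : Equiv.Perm (Fin (n + 1))) : Equiv.Perm (Fin n) :=
  Equiv.removeNone
    (Equiv.permCongr finSuccEquivLast ((dperm (τ.symm (Fin.last n))).symm.trans τ))

lemma insp_symm_last {n : ℕ} (σ : Equiv.Perm (Fin n)) (p : Fin (n + 1)) :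
    (insp σ p).symm (Fin.last n) = p :=
  (Equiv.symm_apply_eq _).mpr (insp_apply_self σ p).symm

lemma delp_insp {n : ℕ} (σ : Equiv.Perm (Fin n)) (p : Fin (n + 1)) :
    delp (insp σ p) = σ := by
  rw [delp, insp_symm_last]
  have h : (dperm p).symm.trans (insp σ p) = Eperm σ := by
    rw [insp, ← Equiv.trans_assoc, Equiv.symm_trans_self, Equiv.refl_trans]
  rw [h, Eperm, Equiv.apply_symm_apply]
  exact Equiv.removeNone_optionCongr σ

lemma insp_delp {n : ℕ} (τ : Equiv.Perm (Fin (n + 1))) :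
    insp (delp τ) (τ.symm (Fin.last n)) = τ := by
  set q := τ.symm (Fin.last n) with hq
  have hql : τ q = Fin.last n := τ.apply_symm_apply _
  have h1 : (dperm q).symm (Fin.last n) = q := (Equiv.symm_apply_eq _).mpr (dperm_apply_self q).symm
  have hnone : (Equiv.permCongr finSuccEquivLast ((dperm q).symm.trans τ)) none = none := by
    simp only [Equiv.permCongr_apply, Equiv.trans_apply, finSuccEquivLast_symm_none]
    rw [h1, hql, finSuccEquivLast_last]
  have h2 : Eperm (delp τ) = (dperm q).symm.trans τ := by
    rw [delp, ← hq, Eperm, optionCongr_removeNone' _ hnone, Equiv.symm_apply_apply]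
  rw [insp, h2, ← Equiv.trans_assoc, Equiv.self_trans_symm, Equiv.refl_trans]

/-! ### The key bijection identity -/

lemma F2poly_succ (n : ℕ) :
    F2poly (n + 1) = ∑ σ ∈ Finset.univ.filter
        (fun σ : Equiv.Perm (Fin n) => ¬ HasAscSeq (⇑σ) 3),
      ∑ j ∈ Finset.Icc 1 (aFirst ⇑σ), (Polynomial.X : Polynomial ℤ) ^ j := by
  rw [Finset.sum_sigma', F2poly]
  refine Finset.sum_nbij'
    (i := fun τ : Equiv.Perm (Fin (n + 1)) =>
      (⟨delp τ, aFirst (⇑τ) - 1⟩ : Σ _ : Equiv.Perm (Fin n), ℕ))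
    (j := fun x : Σ _ : Equiv.Perm (Fin n), ℕ =>
      insp x.1 (if x.2 = aFirst (⇑x.1) then 0 else ⟨min x.2 n, by omega⟩))
    ?_ ?_ ?_ ?_ ?_
  · -- forward membership
    intro τ hτ
    rw [Finset.mem_filter] at hτ
    have hav := hτ.2
    set q := τ.symm (Fin.last n) with hqdef
    have hins : insp (delp τ) q = τ := insp_delp τ
    have havq : ¬ HasAscSeq (⇑(insp (delp τ) q)) 3 := by rw [hins]; exact hav
    have hσav : ¬ HasAscSeq (⇑(delp τ)) 3 := not_hasAscSeq_of_insp _ _ havq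
    rw [Finset.mem_sigma, Finset.mem_filter, Finset.mem_Icc]
    refine ⟨⟨Finset.mem_univ _, hσav⟩, ?_, ?_⟩
    · -- 1 ≤ aFirst τ - 1
      dsimp only
      rcases Nat.eq_zero_or_pos (q : ℕ) with hq0 | hq0
      · have : q = 0 := Fin.ext hq0
        rw [← hins, this, aFirst_insp_zero]
        have := one_le_aFirst (⇑(delp τ)); omega
      · have hb := bound_insp _ _ hq0 havq
        rw [← hins, aFirst_insp_pos _ _ hq0 hb]
        omega
    · -- aFirst τ - 1 ≤ aFirst (delp τ)
      dsimp only
      rcases Nat.eq_zero_or_pos (q : ℕ) with hq0 | hq0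
      · have : q = 0 := Fin.ext hq0
        rw [← hins, this, aFirst_insp_zero, delp_insp]
        omega
      · have hb := bound_insp _ _ hq0 havq
        rw [← hins, aFirst_insp_pos _ _ hq0 hb, delp_insp]
        omega
  · -- backward membership
    rintro ⟨σ, j⟩ hx
    simp only [Finset.mem_sigma, Finset.mem_filter, Finset.mem_Icc] at hx
    obtain ⟨⟨-, hσav⟩, hj1, hj2⟩ := hx
    rw [Finset.mem_filter]
    refine ⟨Finset.mem_univ _, ?_⟩
    dsimp only
    have ha := aFirst_le_add_one (⇑σ)
    by_cases hcase : j = aFirst (⇑σ)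
    · rw [if_pos hcase]
      exact not_hasAscSeq_insp σ 0 hσav (by simp; omega)
    · rw [if_neg hcase]
      exact not_hasAscSeq_insp σ _ hσav (by simp; omega)
  · -- left inverse
    intro τ hτ
    rw [Finset.mem_filter] at hτ
    have hav := hτ.2
    set q := τ.symm (Fin.last n) with hqdef
    have hins : insp (delp τ) q = τ := insp_delp τ
    have havq : ¬ HasAscSeq (⇑(insp (delp τ) q)) 3 := by rw [hins]; exact hav
    dsimp only
    rcases Nat.eq_zero_or_pos (q : ℕ) with hq0 | hq0
    · have hq : q = 0 := Fin.ext hq0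
      have haf : aFirst (⇑τ) = aFirst (⇑(delp τ)) + 1 := by
        rw [← hins, hq, aFirst_insp_zero, delp_insp]
      rw [if_pos (by omega : aFirst (⇑τ) - 1 = aFirst (⇑(delp τ)))]
      rw [← hq]
      exact hins
    · have hb := bound_insp _ _ hq0 havq
      have haf : aFirst (⇑τ) = (q : ℕ) + 1 := by
        rw [← hins, aFirst_insp_pos _ _ hq0 hb]
      rw [if_neg (by omega : ¬ aFirst (⇑τ) - 1 = aFirst (⇑(delp τ)))]
      have hqn := q.isLt
      have : (⟨min (aFirst (⇑τ) - 1) n, by omega⟩ : Fin (n + 1)) = q :=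
        Fin.ext (by simp; omega)
      rw [this]
      exact hins
  · -- right inverse
    rintro ⟨σ, j⟩ hx
    simp only [Finset.mem_sigma, Finset.mem_filter, Finset.mem_Icc] at hx
    obtain ⟨⟨-, hσav⟩, hj1, hj2⟩ := hx
    have ha := aFirst_le_add_one (⇑σ)
    dsimp only
    by_cases hcase : j = aFirst (⇑σ)
    · rw [if_pos hcase]
      rw [delp_insp σ 0, aFirst_insp_zero]
      have hv : aFirst (⇑σ) + 1 - 1 = j := by omega
      rw [hv]
    · rw [if_neg hcase]
      rw [delp_insp σ _, aFirst_insp_pos σ _ (by simp; omega) (by simp; omega)]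
      have hv : ((⟨min j n, by omega⟩ : Fin (n + 1)) : ℕ) + 1 - 1 = j := by simp; omega
      rw [hv]
  · -- summand
    intro τ hτ
    rfl

/-- Geometric series step. -/
lemma geom_part (a : ℕ) (ha : 1 ≤ a) :
    ((Polynomial.X : Polynomial ℤ) - 1) * ∑ j ∈ Finset.Icc 1 a, Polynomial.X ^ j
      = Polynomial.X ^ 2 * Polynomial.X ^ (a - 1) - Polynomial.X := by
  have hins : Finset.range (a + 1) = insert 0 (Finset.Icc 1 a) := by
    ext x
    simp [Finset.mem_range, Finset.mem_Icc]
    omega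
  have h0 : (0 : ℕ) ∉ Finset.Icc 1 a := by simp
  have hsum : ∑ j ∈ Finset.range (a + 1), (Polynomial.X : Polynomial ℤ) ^ j
      = 1 + ∑ j ∈ Finset.Icc 1 a, Polynomial.X ^ j := by
    rw [hins, Finset.sum_insert h0, pow_zero]
  have hgeom := geom_sum_mul (Polynomial.X : Polynomial ℤ) (a + 1)
  have h2 : (Polynomial.X : Polynomial ℤ) ^ (a + 1)
      = Polynomial.X ^ 2 * Polynomial.X ^ (a - 1) := by
    rw [← pow_add]
    congr 1
    omega
  have hkey : ((Polynomial.X : Polynomial ℤ) - 1) * ∑ j ∈ Finset.Icc 1 a, Polynomial.X ^ j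
      = (∑ j ∈ Finset.range (a + 1), (Polynomial.X : Polynomial ℤ) ^ j) * (Polynomial.X - 1)
        - (Polynomial.X - 1) := by
    rw [hsum]; ring
  rw [hkey, hgeom, h2]
  ring

/-- The functional equation for 123-avoiding permutations with the first-ascent
statistic: `F_0 = 1` and `(u−1)·F_{n+1}(u) = u²·F_n(u) − u·F_n(1)` in `ℤ[u]`. -/
theorem functional_equation_123 :
    F2poly 0 = 1 ∧
    ∀ n : ℕ,
      (Polynomial.X - 1) * F2poly (n + 1)
        = Polynomial.X ^ 2 * F2poly n
          - Polynomial.C ((F2poly n).eval 1) * Polynomial.X := by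
  constructor
  · rw [F2poly]
    have h1 : ∀ τ : Equiv.Perm (Fin 0), ¬ HasAscSeq (⇑τ) 3 := by
      rintro τ ⟨s, -, -⟩
      exact (s 0).elim0
    rw [Finset.filter_true_of_mem (fun τ _ => h1 τ)]
    have h2 : ∀ τ : Equiv.Perm (Fin 0), aFirst (⇑τ) = 1 := fun τ =>
      aFirst_eq_none' (⇑τ) (fun q hq1 hq0 => absurd hq0 (by omega))
    rw [Finset.sum_congr rfl (fun τ _ => by rw [h2 τ] :
      ∀ τ ∈ (Finset.univ : Finset (Equiv.Perm (Fin 0))),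
        (Polynomial.X : Polynomial ℤ) ^ (aFirst (⇑τ) - 1) = Polynomial.X ^ (1 - 1))]
    simp [Fintype.card_perm]
  · intro n
    have hstep : ∑ σ ∈ Finset.univ.filter
        (fun σ : Equiv.Perm (Fin n) => ¬ HasAscSeq (⇑σ) 3),
          ((Polynomial.X : Polynomial ℤ) - 1) * ∑ j ∈ Finset.Icc 1 (aFirst ⇑σ), Polynomial.X ^ j
        = ∑ σ ∈ Finset.univ.filter
        (fun σ : Equiv.Perm (Fin n) => ¬ HasAscSeq (⇑σ) 3),
          ((Polynomial.X : Polynomial ℤ) ^ 2 * Polynomial.X ^ (aFirst (⇑σ) - 1)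
            - Polynomial.X) :=
      Finset.sum_congr rfl (fun σ _ => geom_part (aFirst ⇑σ) (one_le_aFirst _))
    rw [F2poly_succ n, Finset.mul_sum, hstep, Finset.sum_sub_distrib, ← Finset.mul_sum]
    have hF : ∑ σ ∈ Finset.univ.filter
        (fun σ : Equiv.Perm (Fin n) => ¬ HasAscSeq (⇑σ) 3),
        (Polynomial.X : Polynomial ℤ) ^ (aFirst (⇑σ) - 1) = F2poly n := rfl
    rw [hF]
    have heval : (F2poly n).eval 1 = ((Finset.univ.filter
        (fun σ : Equiv.Perm (Fin n) => ¬ HasAscSeq (⇑σ) 3)).card : ℤ) := by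
      rw [F2poly]
      simp [Polynomial.eval_finset_sum]
    rw [heval, Finset.sum_const]
    simp [nsmul_eq_mul]
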